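/- Under hypotheses (H1) and (H2), the rank function of the elementary split matroid defined by I = {X ⊆ S : |X| ≤ r, |X ∩ H_i| ≤ r_i for all i} is given by r_M(Z) = min{ r, |Z|, min_{1≤i≤q} (|Z \ H_i| + r_i) } for every Z ⊆ S. -/

import Mathlib

/-- Under (H1) and (H2), the rank of `Z` in the elementary split matroid, i.e. the maximum
size of a member of `I = {X ⊆ S : |X| ≤ r, |X ∩ Hᵢ| ≤ rᵢ}` contained in `Z`, equals
`min {r, |Z|, min_i (|Z \ Hᵢ| + rᵢ)}`. -/
theorem elementary_split_rank_formula {α : Type*} (S : Set α) (hS : S.Finite)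
    (r q : ℕ) (H : Fin q → Set α) (rr : Fin q → ℕ)
    (hHS : ∀ i, H i ⊆ S) (hSr : r ≤ S.ncard)
    (h1 : ∀ i j : Fin q, i < j → (H i ∩ H j).ncard + r ≤ rr i + rr j)
    (h2 : ∀ i : Fin q, r ≤ (S \ H i).ncard + rr i) :
    ∀ Z ⊆ S, IsGreatest
      {n : ℕ | ∃ X ⊆ Z, (X.ncard ≤ r ∧ ∀ i, (X ∩ H i).ncard ≤ rr i) ∧ X.ncard = n}
      (sInf (insert r (insert Z.ncard (Set.range fun i => (Z \ H i).ncard + rr i)))) := by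
  intro Z hZS
  have hZfin : Z.Finite := hS.subset hZS
  set T : Set ℕ :=
    {n : ℕ | ∃ X ⊆ Z, (X.ncard ≤ r ∧ ∀ i, (X ∩ H i).ncard ≤ rr i) ∧ X.ncard = n} with hT
  set m : ℕ := sInf (insert r (insert Z.ncard (Set.range fun i => (Z \ H i).ncard + rr i)))
    with hm
  have h0T : 0 ∈ T := ⟨∅, by simp⟩
  have hbdd : ∀ n ∈ T, n ≤ r := by rintro n ⟨X, hXZ, ⟨hXr, _⟩, rfl⟩; exact hXr
  have hTbdd : BddAbove T := ⟨r, hbdd⟩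
  -- upper bound part
  have hub : ∀ n ∈ T, n ≤ m := by
    rintro n ⟨X, hXZ, ⟨hXr, hXi⟩, rfl⟩
    have hXfin : X.Finite := hZfin.subset hXZ
    apply le_csInf ⟨r, Set.mem_insert _ _⟩
    rintro b hb
    simp only [Set.mem_insert_iff, Set.mem_range] at hb
    rcases hb with rfl | rfl | ⟨i, rfl⟩
    · exact hXr
    · exact Set.ncard_le_ncard hXZ hZfin
    · have hsplit : (X ∩ H i).ncard + (X \ H i).ncard = X.ncard :=
        Set.ncard_inter_add_ncard_diff_eq_ncard X (H i) hXfin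
      have hdiff : (X \ H i).ncard ≤ (Z \ H i).ncard :=
        Set.ncard_le_ncard (Set.diff_subset_diff_left hXZ) hZfin.diff
      have := hXi i
      omega
  have hNmem : sSup T ∈ T := Nat.sSup_mem ⟨0, h0T⟩ hTbdd
  set N := sSup T with hNdef
  have hNm : N ≤ m := hub N hNmem
  have hmN : m ≤ N := by
    by_contra hcon
    push_neg at hcon
    obtain ⟨X, hXZ, ⟨hXr, hXi⟩, hcard⟩ := hNmem
    have hXfin : X.Finite := hZfin.subset hXZ
    have hNr : N < r := lt_of_lt_of_le hcon (Nat.sInf_le (Set.mem_insert _ _))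
    have hNZ : N < Z.ncard :=
      lt_of_lt_of_le hcon (Nat.sInf_le (Set.mem_insert_of_mem _ (Set.mem_insert _ _)))
    have hNi : ∀ i, N < (Z \ H i).ncard + rr i := fun i =>
      lt_of_lt_of_le hcon (Nat.sInf_le (Set.mem_insert_of_mem _
        (Set.mem_insert_of_mem _ ⟨i, rfl⟩)))
    -- exchange: any z ∈ Z \ X has a tight constraint
    have key : ∀ z ∈ Z, z ∉ X → ∃ i, z ∈ H i ∧ rr i ≤ (X ∩ H i).ncard := by
      intro z hzZ hzX
      by_contra hc
      push_neg at hc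
      have hfeas : N + 1 ∈ T := by
        refine ⟨insert z X, Set.insert_subset hzZ hXZ, ⟨?_, ?_⟩, ?_⟩
        · rw [Set.ncard_insert_of_notMem hzX hXfin, hcard]; omega
        · intro i
          by_cases hzHi : z ∈ H i
          · have : insert z X ∩ H i = insert z (X ∩ H i) := by
              ext x; simp only [Set.mem_insert_iff, Set.mem_inter_iff]
              constructor
              · rintro ⟨rfl | hx, hxH⟩
                · exact Or.inl rfl
                · exact Or.inr ⟨hx, hxH⟩
              · rintro (rfl | ⟨hx, hxH⟩)
                · exact ⟨Or.inl rfl, hzHi⟩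
                · exact ⟨Or.inr hx, hxH⟩
            rw [this, Set.ncard_insert_of_notMem (fun h => hzX h.1)
              (hXfin.subset Set.inter_subset_left)]
            have := hc i hzHi
            omega
          · have : insert z X ∩ H i = X ∩ H i := by
              ext x; simp only [Set.mem_insert_iff, Set.mem_inter_iff]
              constructor
              · rintro ⟨rfl | hx, hxH⟩
                · exact absurd hxH hzHi
                · exact ⟨hx, hxH⟩
              · rintro ⟨hx, hxH⟩; exact ⟨Or.inr hx, hxH⟩
            rw [this]; exact hXi i
        · rw [Set.ncard_insert_of_notMem hzX hXfin, hcard]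
      have := le_csSup hTbdd hfeas
      omega
    -- get some z ∈ Z \ X
    obtain ⟨z, hzZ, hzX⟩ : ∃ z ∈ Z, z ∉ X := by
      by_contra hc
      push_neg at hc
      have := Set.ncard_le_ncard hc hXfin
      omega
    obtain ⟨i, hzi, hti⟩ := key z hzZ hzX
    have htieq : (X ∩ H i).ncard = rr i := le_antisymm (hXi i) hti
    by_cases hcov : ∀ w ∈ Z, w ∉ X → w ∈ H i
    · -- Z \ H i ⊆ X \ H i
      have hsub : Z \ H i ⊆ X \ H i := by
        rintro w ⟨hwZ, hwH⟩
        refine ⟨?_, hwH⟩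
        by_contra hwX
        exact hwH (hcov w hwZ hwX)
      have h1' : (Z \ H i).ncard ≤ (X \ H i).ncard :=
        Set.ncard_le_ncard hsub hXfin.diff
      have hsplit : (X ∩ H i).ncard + (X \ H i).ncard = X.ncard :=
        Set.ncard_inter_add_ncard_diff_eq_ncard X (H i) hXfin
      have := hNi i
      omega
    · push_neg at hcov
      obtain ⟨w, hwZ, hwX, hwH⟩ := hcov
      obtain ⟨j, hwj, htj⟩ := key w hwZ hwX
      have hij : i ≠ j := fun h => hwH (h ▸ hwj)
      -- inclusion-exclusion bound
      have hfin_i : (X ∩ H i).Finite := hXfin.subset Set.inter_subset_left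
      have hfin_j : (X ∩ H j).Finite := hXfin.subset Set.inter_subset_left
      have hIE : ((X ∩ H i) ∪ (X ∩ H j)).ncard + ((X ∩ H i) ∩ (X ∩ H j)).ncard
          = (X ∩ H i).ncard + (X ∩ H j).ncard :=
        Set.ncard_union_add_ncard_inter _ _ hfin_i hfin_j
      have hU : ((X ∩ H i) ∪ (X ∩ H j)).ncard ≤ X.ncard :=
        Set.ncard_le_ncard (Set.union_subset Set.inter_subset_left Set.inter_subset_left)
          hXfin
      have hI : ((X ∩ H i) ∩ (X ∩ H j)).ncard ≤ (H i ∩ H j).ncard := by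
        refine Set.ncard_le_ncard ?_ ((hS.subset (hHS i)).inter_of_left _)
        rintro x ⟨⟨_, hxi⟩, ⟨_, hxj⟩⟩
        exact ⟨hxi, hxj⟩
      have hh1 : (H i ∩ H j).ncard + r ≤ rr i + rr j := by
        rcases lt_trichotomy i j with h | h | h
        · exact h1 i j h
        · exact absurd h hij
        · have := h1 j i h
          rwa [Set.inter_comm, Nat.add_comm (rr j)] at this
      omega
  have hmem : m ∈ T := le_antisymm hmN hNm ▸ hNmem
  exact ⟨hmem, hub⟩
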